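/- Suppose Assumption 1 holds. Fix an initial time t0 ≥ 0 and an integer L ≥ 1, and define B(t) = A((t+1)L − 1 + t0) ⋯ A(tL + 1 + t0) A(tL + t0) for each t ≥ 0, with entries b_ij(t). If ∑_{t=0}^∞ b_ij(t) = ∞ for some pair (j,i), then there exist nodes k_0 = j, k_1, …, k_{L−1}, k_L = i such that ∑_{t=0}^∞ a_{k_{s+1} k_s}(tL + s + t0) = ∞ for every s ∈ {0,…,L−1}; consequently each (k_s, k_{s+1}) is a persistent arc, and there is a directed walk of length L from j to i in the persistent graph G_p. -/

import Mathlib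

open Filter Finset

/-- Arc `(j,i)` is persistent: `∑_{t=0}^∞ a_ij(t) = ∞`, where `a_ij(t) = A t i j`. -/
def PersistentArc {N : ℕ} (A : ℕ → Matrix (Fin N) (Fin N) ℝ) (j i : Fin N) : Prop :=
  Tendsto (fun n => ∑ t ∈ Finset.range n, A t i j) atTop atTop

/-- `Bmat A L t0 t = A((t+1)L − 1 + t0) ⋯ A(tL + 1 + t0) A(tL + t0)`. -/
def Bmat {N : ℕ} (A : ℕ → Matrix (Fin N) (Fin N) ℝ) (L t0 t : ℕ) :
    Matrix (Fin N) (Fin N) ℝ :=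
  (List.ofFn (fun u : Fin L => A ((t + 1) * L - 1 - (u : ℕ) + t0))).prod

/-- Non-dependent `Fin.cons`, prepending a head node to a tuple of nodes. -/
def pcons {N L : ℕ} (i : Fin N) (k : Fin L → Fin N) : Fin (L + 1) → Fin N :=
  Fin.cons i k

@[simp] lemma pcons_zero {N L : ℕ} (i : Fin N) (k : Fin L → Fin N) :
    pcons i k 0 = i := rfl

@[simp] lemma pcons_succ {N L : ℕ} (i : Fin N) (k : Fin L → Fin N) (s : Fin L) :
    pcons i k s.succ = k s := by simp [pcons]

/-- Entry of a product of matrices as a sum over paths. -/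
lemma listProd_apply {N : ℕ} :
    ∀ (L : ℕ) (g : Fin L → Matrix (Fin N) (Fin N) ℝ) (i j : Fin N),
    (List.ofFn g).prod i j
      = ∑ k : Fin L → Fin N,
          if pcons i k (Fin.last L) = j then
            ∏ s : Fin L, g s (pcons i k s.castSucc) (pcons i k s.succ)
          else 0 := by
  intro L
  induction L with
  | zero =>
      intro g i j
      simp [pcons, Matrix.one_apply]
  | succ L ih =>
      intro g i j
      have hofn : (List.ofFn g) = g 0 :: List.ofFn (fun s : Fin L => g s.succ) :=
        List.ofFn_succ (f := g)
      rw [hofn, List.prod_cons, Matrix.mul_apply]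
      have hrhs :
          (∑ k : Fin (L + 1) → Fin N,
            if pcons i k (Fin.last (L + 1)) = j then
              ∏ s : Fin (L + 1), g s (pcons i k s.castSucc) (pcons i k s.succ)
            else 0)
          = ∑ p : Fin N × (Fin L → Fin N),
              if pcons i (pcons p.1 p.2) (Fin.last (L + 1)) = j then
                ∏ s : Fin (L + 1), g s (pcons i (pcons p.1 p.2) s.castSucc)
                  (pcons i (pcons p.1 p.2) s.succ)
              else 0 := by
        rw [← Equiv.sum_comp (Fin.consEquiv (fun _ : Fin (L + 1) => Fin N))]
        rfl
      rw [hrhs, Fintype.sum_prod_type]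
      refine Finset.sum_congr rfl fun m _ => ?_
      rw [ih (fun s : Fin L => g s.succ) m j, Finset.mul_sum]
      refine Finset.sum_congr rfl fun k _ => ?_
      have hcond : pcons i (pcons m k) (Fin.last (L + 1)) = pcons m k (Fin.last L) := by
        rw [← Fin.succ_last, pcons_succ]
      have hprod :
          (∏ s : Fin (L + 1), g s (pcons i (pcons m k) s.castSucc)
              (pcons i (pcons m k) s.succ))
          = g 0 i m * ∏ s : Fin L, g s.succ (pcons m k s.castSucc) (pcons m k s.succ) := by
        have h0 : g 0 (pcons i (pcons m k) ((0 : Fin (L + 1)).castSucc))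
            (pcons i (pcons m k) ((0 : Fin (L + 1)).succ)) = g 0 i m := by
          simp [pcons]
        rw [Fin.prod_univ_succ, h0]
        refine congrArg (g 0 i m * ·) ?_
        refine Finset.prod_congr rfl fun s _ => ?_
        rw [← Fin.succ_castSucc, pcons_succ, pcons_succ, pcons_succ]
      rw [hcond, hprod, mul_ite, mul_zero]

/-- Divergence of a subseries (along a strictly monotone index map) of a nonnegative
series implies divergence of the series. -/
lemma subseq_div {f : ℕ → ℝ} (hnn : ∀ t, 0 ≤ f t) (φ : ℕ → ℕ) (hφ : StrictMono φ)
    (h : Tendsto (fun n => ∑ t ∈ Finset.range n, f (φ t)) atTop atTop) :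
    Tendsto (fun n => ∑ t ∈ Finset.range n, f t) atTop atTop := by
  rw [tendsto_atTop_atTop] at h ⊢
  intro b
  obtain ⟨n0, hn0⟩ := h b
  refine ⟨φ n0 + 1, fun m hm => ?_⟩
  have h1 : ∑ t ∈ Finset.range n0, f (φ t) ≤ ∑ u ∈ Finset.range m, f u := by
    rw [← Finset.sum_image (g := φ) (fun x _ y _ hxy => hφ.injective hxy)]
    refine Finset.sum_le_sum_of_subset_of_nonneg ?_ (fun _ _ _ => hnn _)
    intro u hu
    simp only [Finset.mem_image, Finset.mem_range] at hu ⊢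
    obtain ⟨t, ht, rfl⟩ := hu
    have : φ t ≤ φ n0 := hφ.monotone (Nat.le_of_lt ht)
    omega
  exact le_trans (hn0 n0 le_rfl) h1

theorem stmt11 (N : ℕ) (hN : 2 ≤ N) (A : ℕ → Matrix (Fin N) (Fin N) ℝ)
    (η : ℝ) (hη0 : 0 < η) (hη1 : η < 1)
    (hnonneg : ∀ t i j, 0 ≤ A t i j)
    (hrow : ∀ t i, ∑ j, A t i j = 1)
    (hdiag : ∀ t i, η ≤ A t i i)
    (t0 : ℕ) (L : ℕ) (hL : 1 ≤ L)
    (j i : Fin N)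
    (hdiv : Tendsto (fun n => ∑ t ∈ Finset.range n, Bmat A L t0 t i j) atTop atTop) :
    ∃ k : Fin (L + 1) → Fin N, k 0 = j ∧ k (Fin.last L) = i ∧
      ∀ s : Fin L,
        Tendsto (fun n => ∑ t ∈ Finset.range n,
          A (t * L + (s : ℕ) + t0) (k s.succ) (k s.castSucc)) atTop atTop ∧
        PersistentArc A (k s.castSucc) (k s.succ) := by
  -- entries of A are ≤ 1
  have hle1 : ∀ t a b, A t a b ≤ 1 := by
    intro t a b
    calc A t a b ≤ ∑ c, A t a c :=
          Finset.single_le_sum (f := fun c => A t a c) (fun c _ => hnonneg t a c) (mem_univ b)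
      _ = 1 := hrow t a
  -- path weights
  set P : (Fin L → Fin N) → ℕ → ℝ := fun k t =>
    if pcons i k (Fin.last L) = j then
      ∏ s : Fin L, A ((t + 1) * L - 1 - (s : ℕ) + t0)
        (pcons i k s.castSucc) (pcons i k s.succ)
    else 0 with hPdef
  have hB : ∀ t, Bmat A L t0 t i j = ∑ k : Fin L → Fin N, P k t := fun t =>
    listProd_apply L (fun u : Fin L => A ((t + 1) * L - 1 - (u : ℕ) + t0)) i j
  have hPnn : ∀ k t, 0 ≤ P k t := by
    intro k t
    rw [hPdef]
    dsimp only
    split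
    · exact Finset.prod_nonneg fun s _ => hnonneg _ _ _
    · exact le_refl 0
  -- pigeonhole: some path weight series diverges
  have hmono : ∀ k : Fin L → Fin N, Monotone (fun n => ∑ t ∈ Finset.range n, P k t) := by
    intro k n m hnm
    exact Finset.sum_le_sum_of_subset_of_nonneg (Finset.range_subset_range.2 hnm)
      (fun t _ _ => hPnn k t)
  have hex : ∃ k : Fin L → Fin N,
      Tendsto (fun n => ∑ t ∈ Finset.range n, P k t) atTop atTop := by
    by_contra hcon
    push_neg at hcon
    have hl : ∀ k : Fin L → Fin N, ∃ l : ℝ,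
        Tendsto (fun n => ∑ t ∈ Finset.range n, P k t) atTop (nhds l) := fun k =>
      (tendsto_of_monotone (hmono k)).resolve_left (hcon k)
    choose l hl using hl
    have htot : Tendsto (fun n => ∑ k : Fin L → Fin N, ∑ t ∈ Finset.range n, P k t)
        atTop (nhds (∑ k : Fin L → Fin N, l k)) :=
      tendsto_finset_sum _ fun k _ => hl k
    have heq : (fun n => ∑ t ∈ Finset.range n, Bmat A L t0 t i j)
        = fun n => ∑ k : Fin L → Fin N, ∑ t ∈ Finset.range n, P k t := by
      funext n
      rw [show (∑ t ∈ Finset.range n, Bmat A L t0 t i j)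
          = ∑ t ∈ Finset.range n, ∑ k : Fin L → Fin N, P k t from
        Finset.sum_congr rfl fun t _ => hB t]
      exact Finset.sum_comm
    rw [heq] at hdiv
    exact not_tendsto_atTop_of_tendsto_nhds htot hdiv
  obtain ⟨k0, hk0⟩ := hex
  -- the indicator must be true
  have hind : pcons i k0 (Fin.last L) = j := by
    by_contra hne
    have hz : ∀ t, P k0 t = 0 := by
      intro t; rw [hPdef]; exact if_neg hne
    have : (fun n => ∑ t ∈ Finset.range n, P k0 t) = fun _ => (0 : ℝ) := by
      funext n; exact Finset.sum_eq_zero fun t _ => hz t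
    rw [this] at hk0
    exact not_tendsto_atTop_of_tendsto_nhds tendsto_const_nhds hk0
  -- define the reversed path
  refine ⟨fun s => pcons i k0 (Fin.rev s), ?_, ?_, ?_⟩
  · show pcons i k0 (Fin.rev 0) = j
    rw [Fin.rev_zero, hind]
  · show pcons i k0 (Fin.rev (Fin.last L)) = i
    rw [Fin.rev_last]
    rfl
  · intro s
    -- identify endpoints
    have hsucc : pcons i k0 (Fin.rev s.succ) = pcons i k0 (Fin.rev s).castSucc := by
      rw [Fin.rev_succ]
    have hcast : pcons i k0 (Fin.rev s.castSucc) = pcons i k0 (Fin.rev s).succ := by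
      rw [Fin.rev_castSucc]
    -- key pointwise bound
    have hkey : ∀ t, P k0 t ≤
        A (t * L + (s : ℕ) + t0) (pcons i k0 (Fin.rev s.succ)) (pcons i k0 (Fin.rev s.castSucc)) := by
      intro t
      rw [hsucc, hcast]
      have hval : (t + 1) * L - 1 - ((Fin.rev s : Fin L) : ℕ) + t0 = t * L + (s : ℕ) + t0 := by
        have h1 : ((Fin.rev s : Fin L) : ℕ) = L - ((s : ℕ) + 1) := Fin.val_rev s
        have h2 : (s : ℕ) < L := s.isLt
        have h3 : (t + 1) * L = t * L + L := by ring
        omega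
      rw [hPdef]
      dsimp only
      rw [if_pos hind]
      set f : Fin L → ℝ := fun u => A ((t + 1) * L - 1 - (u : ℕ) + t0)
        (pcons i k0 u.castSucc) (pcons i k0 u.succ) with hf
      have hstep : f (Fin.rev s) =
          A (t * L + (s : ℕ) + t0) (pcons i k0 (Fin.rev s).castSucc)
            (pcons i k0 (Fin.rev s).succ) := by
        rw [hf]; dsimp only; rw [hval]
      calc (∏ u : Fin L, f u)
          = f (Fin.rev s) * ∏ u ∈ Finset.univ.erase (Fin.rev s), f u :=
            (Finset.mul_prod_erase Finset.univ f (mem_univ (Fin.rev s))).symm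
        _ ≤ f (Fin.rev s) * 1 := by
            refine mul_le_mul_of_nonneg_left ?_ (hnonneg _ _ _)
            exact Finset.prod_le_one (fun u _ => hnonneg _ _ _) (fun u _ => hle1 _ _ _)
        _ = f (Fin.rev s) := mul_one _
        _ = _ := hstep
    have hA : Tendsto (fun n => ∑ t ∈ Finset.range n,
        A (t * L + (s : ℕ) + t0) (pcons i k0 (Fin.rev s.succ))
          (pcons i k0 (Fin.rev s.castSucc))) atTop atTop := by
      refine tendsto_atTop_mono (fun n => ?_) hk0
      exact Finset.sum_le_sum fun t _ => hkey t
    refine ⟨hA, ?_⟩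
    -- persistence
    have hφ : StrictMono (fun t => t * L + (s : ℕ) + t0) := by
      intro a b hab
      dsimp only
      have : a * L < b * L := by
        exact Nat.mul_lt_mul_of_lt_of_le hab (le_refl L) (by omega)
      omega
    exact subseq_div (fun t => hnonneg t _ _) _ hφ hA
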